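/- Let d ≥ 3 be an integer and let ζ ∈ (0, π). Then ∫_ζ^π (1 − cos θ)^{−(d−2)/2} (1 + cos θ)^{(d−3)/2} · sin θ / √(cos ζ − cos θ) dθ = (√π · Γ((d−1)/2) / Γ(d/2)) · cos^{d−2}(ζ/2) · ₂F₁((d−2)/2, (d−1)/2; d/2; cos²(ζ/2)). -/

import Mathlib

open Real MeasureTheory Set

/-- The Pochhammer symbol `(a)_n = a(a+1)⋯(a+n−1)`, with `(a)_0 = 1`. -/
noncomputable def poch (a : ℝ) (n : ℕ) : ℝ := ∏ i ∈ Finset.range n, (a + i)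

/-- The Gauss hypergeometric function `₂F₁(a,b;c;z) = Σₙ ((a)ₙ(b)ₙ/(c)ₙ) zⁿ/n!`. -/
noncomputable def hyp2F1 (a b c z : ℝ) : ℝ :=
  ∑' n : ℕ, poch a n * poch b n / poch c n * z ^ n / (n.factorial : ℝ)

lemma poch_succ (a : ℝ) (n : ℕ) : poch a (n+1) = poch a n * (a + n) := by
  simp [poch, Finset.prod_range_succ]

lemma poch_pos {a : ℝ} (ha : 0 < a) (n : ℕ) : 0 < poch a n :=
  Finset.prod_pos (fun i _ => by positivity)

lemma Gamma_poch {a : ℝ} (ha : 0 < a) (n : ℕ) :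
    Real.Gamma (a + n) = Real.Gamma a * poch a n := by
  induction n with
  | zero => simp [poch]
  | succ n ih =>
    have h : a + ((n:ℕ)+1 : ℕ) = (a + n) + 1 := by push_cast; ring
    rw [h, Real.Gamma_add_one (by positivity), ih, poch_succ]; ring

lemma tendsto_one_ratio (a c : ℝ) :
    Filter.Tendsto (fun n : ℕ => (a + n)/(c + n)) Filter.atTop (nhds 1) := by
  have h0 : Filter.Tendsto (fun n : ℕ => (a - c)/(c + n)) Filter.atTop (nhds 0) :=
    Filter.Tendsto.div_atTop tendsto_const_nhds
      (Filter.tendsto_atTop_add_const_left _ c (tendsto_natCast_atTop_atTop))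
  have h1 : Filter.Tendsto (fun n : ℕ => 1 + (a - c)/(c + n)) Filter.atTop (nhds 1) := by
    simpa using h0.const_add 1
  apply h1.congr'
  filter_upwards [Filter.eventually_gt_atTop ⌈-c⌉₊] with n hn
  have hc : (0:ℝ) < c + n := by
    have h2 : ((⌈-c⌉₊ : ℕ) : ℝ) < n := by exact_mod_cast hn
    have h3 : -c ≤ (⌈-c⌉₊ : ℝ) := Nat.le_ceil _
    linarith
  field_simp
  ring

lemma summable_poch {a b c : ℝ} (ha : 0 < a) (hb : 0 < b) (hc : 0 < c)
    {z : ℝ} (hz0 : 0 ≤ z) (hz1 : z < 1) :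
    Summable (fun n : ℕ => poch a n * poch b n / poch c n * z ^ n / (n.factorial : ℝ)) := by
  set f : ℕ → ℝ := fun n => poch a n * poch b n / poch c n * z ^ n / (n.factorial : ℝ) with hf
  have hfpos : ∀ n, 0 ≤ f n := fun n => by
    have := poch_pos ha n; have := poch_pos hb n; have := poch_pos hc n
    positivity
  rcases eq_or_lt_of_le hz0 with h | hz0'
  · apply summable_of_ne_finset_zero (s := ({0} : Finset ℕ))
    intro n hn
    have hn' : n ≠ 0 := by simpa using hn
    simp [hf, ← h, zero_pow hn']
  · -- ratio test
    have hrec : ∀ n : ℕ, f (n+1) = f n * ((a+n)*(b+n)/((c+n)*(n+1)) * z) := by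
      intro n
      have h1 : poch c n ≠ 0 := (poch_pos hc n).ne'
      have h2 : (c + (n:ℝ)) ≠ 0 := by positivity
      have h3 : ((n.factorial : ℝ)) ≠ 0 := by positivity
      have h4 : ((n:ℝ) + 1) ≠ 0 := by positivity
      simp only [hf, poch_succ, Nat.factorial_succ]
      push_cast
      field_simp
      ring
    have hlim : Filter.Tendsto (fun n : ℕ => (a+n)*(b+n)/((c+n)*(n+1)) * z)
        Filter.atTop (nhds z) := by
      have h1 := (tendsto_one_ratio a c).mul (tendsto_one_ratio b 1)
      have h2 : Filter.Tendsto (fun n : ℕ => (a+n)*(b+n)/((c+n)*(n+1)))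
          Filter.atTop (nhds 1) := by
        simpa [div_mul_div_comm, add_comm (1:ℝ)] using h1
      simpa using h2.mul_const z
    have hr : z < (1+z)/2 := by linarith
    apply summable_of_ratio_norm_eventually_le (r := (1+z)/2) (by linarith)
    filter_upwards [hlim.eventually_le_const hr] with n hn
    rw [hrec n]
    rw [Real.norm_eq_abs, Real.norm_eq_abs, abs_of_nonneg (hfpos n),
      abs_of_nonneg (mul_nonneg (hfpos n) (by positivity))]
    calc f n * ((a+n)*(b+n)/((c+n)*(n+1)) * z) ≤ f n * ((1+z)/2) := by
          apply mul_le_mul_of_nonneg_left hn (hfpos n)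
      _ = (1+z)/2 * f n := by ring

lemma summable_poch' {a : ℝ} (ha : 0 < a) {z : ℝ} (hz0 : 0 ≤ z) (hz1 : z < 1) :
    Summable (fun n : ℕ => poch a n / (n.factorial : ℝ) * z ^ n) := by
  have := summable_poch ha one_pos one_pos hz0 hz1
  apply this.congr
  intro n
  have h1 : poch 1 n ≠ 0 := (poch_pos one_pos n).ne'
  field_simp

lemma binom_series {a t : ℝ} (ha : 0 < a) (ht0 : 0 ≤ t) (ht1 : t < 1) :
    ∑' n : ℕ, poch a n / (n.factorial : ℝ) * t ^ n = (1 - t) ^ (-a) := by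
  have h1t : 0 < 1 - t := by linarith
  set F : ℕ → ℝ → ℝ := fun n x => (t^n / (n.factorial : ℝ)) * (Real.exp (-x) * x ^ (a + n - 1))
    with hF
  have hGpos : ∀ n : ℕ, (0:ℝ) < a + n := fun n => by positivity
  have hFint : ∀ n : ℕ, IntegrableOn (F n) (Ioi 0) := fun n =>
    (Real.GammaIntegral_convergent (hGpos n)).const_mul _
  have hFval : ∀ n : ℕ, ∫ x in Ioi 0, F n x = (t^n / (n.factorial : ℝ)) * Real.Gamma (a + n) := by
    intro n
    rw [hF]
    simp only
    rw [MeasureTheory.integral_const_mul, ← Real.Gamma_eq_integral (hGpos n)]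
  have hFnorm : ∀ n : ℕ, ∫ x in Ioi 0, ‖F n x‖ =
      (t^n / (n.factorial : ℝ)) * Real.Gamma (a + n) := by
    intro n
    rw [← hFval n]
    apply setIntegral_congr_fun measurableSet_Ioi
    intro x hx
    have hx' : (0:ℝ) < x := hx
    show ‖F n x‖ = F n x
    rw [Real.norm_eq_abs, abs_of_nonneg]
    simp only [hF]
    exact mul_nonneg (div_nonneg (pow_nonneg ht0 n) (Nat.cast_nonneg _))
      (mul_nonneg (Real.exp_pos _).le (Real.rpow_nonneg hx'.le _))
  have hsum : Summable (fun n : ℕ => ∫ x in Ioi 0, ‖F n x‖) := by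
    simp_rw [hFnorm]
    have h2 : Summable (fun n : ℕ => Real.Gamma a * (poch a n / (n.factorial : ℝ) * t ^ n)) :=
      (summable_poch' ha ht0 ht1).mul_left _
    apply h2.congr
    intro n
    rw [Gamma_poch ha]
    ring
  have hswap := MeasureTheory.integral_tsum_of_summable_integral_norm
    (μ := volume.restrict (Ioi 0)) hFint hsum
  -- pointwise sum
  have hpt : ∀ x ∈ Ioi (0:ℝ), ∑' n : ℕ, F n x = x ^ (a-1) * Real.exp (-((1-t)*x)) := by
    intro x hx
    have hx' : (0:ℝ) < x := hx
    have h1 : ∀ n : ℕ, F n x = (Real.exp (-x) * x ^ (a-1)) * ((t*x)^n / (n.factorial : ℝ)) := by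
      intro n
      rw [hF]
      simp only
      rw [show a + (n:ℝ) - 1 = (a - 1) + n by ring, Real.rpow_add hx', Real.rpow_natCast,
        mul_pow]
      ring
    rw [tsum_congr h1, tsum_mul_left]
    have hexp : ∑' n : ℕ, ((t*x)^n / (n.factorial : ℝ)) = Real.exp (t*x) := by
      rw [Real.exp_eq_exp_ℝ, NormedSpace.exp_eq_tsum_div]
    rw [hexp, show -((1-t)*x) = -x + t*x by ring, Real.exp_add]
    ring
  have hint2 : ∫ x in Ioi 0, (∑' n : ℕ, F n x) = (1/(1-t))^a * Real.Gamma a := by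
    rw [setIntegral_congr_fun measurableSet_Ioi hpt]
    exact integral_rpow_mul_exp_neg_mul_Ioi ha h1t
  have hlhs : ∑' n : ℕ, ∫ x in Ioi 0, F n x
      = Real.Gamma a * ∑' n : ℕ, poch a n / (n.factorial : ℝ) * t ^ n := by
    rw [← tsum_mul_left]
    apply tsum_congr
    intro n
    rw [hFval n, Gamma_poch ha]
    ring
  have := hswap
  rw [hlhs, hint2] at this
  have hG : Real.Gamma a ≠ 0 := (Real.Gamma_pos_of_pos ha).ne'
  have h2 : (1/(1-t))^a = (1-t)^(-a) := by
    rw [one_div, Real.inv_rpow h1t.le, ← Real.rpow_neg h1t.le]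
  rw [h2] at this
  exact mul_left_cancel₀ hG (this.trans (mul_comm _ _))

lemma beta_aux {p q : ℝ} (x : ℝ) (hx : 0 ≤ x) (hx1 : x ≤ 1) :
    ((x:ℂ) ^ ((p:ℂ) - 1) * ((1:ℂ) - x) ^ ((q:ℂ) - 1))
      = ((x ^ (p-1) * (1-x) ^ (q-1) : ℝ) : ℂ) := by
  rw [show ((p:ℂ) - 1) = ((p - 1 : ℝ) : ℂ) by push_cast; ring,
    show ((q:ℂ) - 1) = ((q - 1 : ℝ) : ℂ) by push_cast; ring,
    show ((1:ℂ) - (x:ℂ)) = ((1 - x : ℝ) : ℂ) by push_cast; ring,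
    ← Complex.ofReal_cpow hx, ← Complex.ofReal_cpow (by linarith), Complex.ofReal_mul]

lemma beta_integrable {p q : ℝ} (hp : 0 < p) (hq : 0 < q) :
    IntegrableOn (fun x : ℝ => x ^ (p-1) * (1-x) ^ (q-1)) (Ioo (0:ℝ) 1) := by
  have hc := Complex.betaIntegral_convergent (u := (p:ℂ)) (v := (q:ℂ))
    (by simpa using hp) (by simpa using hq)
  rw [intervalIntegrable_iff_integrableOn_Ioc_of_le zero_le_one] at hc
  have hre : IntegrableOn (fun x : ℝ =>
      ((x:ℂ) ^ ((p:ℂ) - 1) * ((1:ℂ) - x) ^ ((q:ℂ) - 1)).re) (Ioc 0 1) := hc.re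
  apply (IntegrableOn.congr_fun hre _ measurableSet_Ioc).mono_set Ioo_subset_Ioc_self
  intro x hx
  show (((x:ℂ) ^ ((p:ℂ) - 1) * ((1:ℂ) - x) ^ ((q:ℂ) - 1)).re) = _
  rw [beta_aux x hx.1.le hx.2, Complex.ofReal_re]

lemma beta_value {p q : ℝ} (hp : 0 < p) (hq : 0 < q) :
    ∫ x in Ioo (0:ℝ) 1, x ^ (p-1) * (1-x) ^ (q-1)
      = Real.Gamma p * Real.Gamma q / Real.Gamma (p+q) := by
  have hc := Complex.Gamma_mul_Gamma_eq_betaIntegral (s := (p:ℂ)) (t := (q:ℂ))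
    (by simpa using hp) (by simpa using hq)
  have hbeta : Complex.betaIntegral p q = ((∫ x in Ioo (0:ℝ) 1, x ^ (p-1) * (1-x) ^ (q-1) : ℝ) : ℂ) := by
    rw [Complex.betaIntegral, intervalIntegral.integral_of_le zero_le_one,
      MeasureTheory.integral_Ioc_eq_integral_Ioo]
    have h1 : ∫ x in Ioo (0:ℝ) 1, (x:ℂ) ^ ((p:ℂ)-1) * ((1:ℂ)-x) ^ ((q:ℂ)-1)
        = ∫ x in Ioo (0:ℝ) 1, ((x ^ (p-1) * (1-x) ^ (q-1) : ℝ) : ℂ) := by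
      apply setIntegral_congr_fun measurableSet_Ioo
      intro x hx
      exact beta_aux x hx.1.le hx.2.le
    rw [h1]
    exact integral_ofReal
  rw [hbeta] at hc
  have hne : Complex.Gamma ((p:ℂ) + q) ≠ 0 :=
    Complex.Gamma_ne_zero_of_re_pos (by simpa using (by positivity : (0:ℝ) < p + q))
  have : ((∫ x in Ioo (0:ℝ) 1, x ^ (p-1) * (1-x) ^ (q-1) : ℝ) : ℂ)
      = ((Real.Gamma p * Real.Gamma q / Real.Gamma (p+q) : ℝ) : ℂ) := by
    rw [Complex.ofReal_div, Complex.ofReal_mul, ← Complex.Gamma_ofReal, ← Complex.Gamma_ofReal,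
      ← Complex.Gamma_ofReal, Complex.ofReal_add]
    rw [eq_div_iff hne, hc]
    ring
  exact_mod_cast this

lemma euler_integral {a b z : ℝ} (ha : 0 < a) (hb : 0 < b) (hz0 : 0 < z) (hz1 : z < 1) :
    ∫ s in Ioo (0:ℝ) 1, s ^ (b-1) * (1-s) ^ (-(1/2 : ℝ)) * (1 - z*s) ^ (-a)
      = (Real.Gamma b * Real.Gamma (1/2) / Real.Gamma (b + 1/2)) * hyp2F1 a b (b + 1/2) z := by
  have hc : (0:ℝ) < b + 1/2 := by linarith
  set G : ℕ → ℝ → ℝ := fun n s =>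
    (poch a n / (n.factorial : ℝ) * z^n) * (s ^ ((b+n)-1) * (1-s) ^ ((1/2 : ℝ)-1)) with hG
  have hGint : ∀ n : ℕ, IntegrableOn (G n) (Ioo (0:ℝ) 1) := fun n =>
    (beta_integrable (by positivity) (by norm_num : (0:ℝ) < 1/2)).const_mul _
  have hGval : ∀ n : ℕ, ∫ s in Ioo (0:ℝ) 1, G n s
      = (Real.Gamma b * Real.Gamma (1/2) / Real.Gamma (b + 1/2)) *
        (poch a n * poch b n / poch (b+1/2) n * z ^ n / (n.factorial : ℝ)) := by
    intro n
    rw [hG]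
    simp only
    rw [MeasureTheory.integral_const_mul, beta_value (by positivity) (by norm_num : (0:ℝ) < 1/2)]
    rw [Gamma_poch hb n, show b + (n:ℝ) + 1/2 = (b + 1/2) + n by ring, Gamma_poch hc n]
    have h1 : Real.Gamma (b + 1/2) ≠ 0 := (Real.Gamma_pos_of_pos hc).ne'
    have h2 : poch (b+1/2) n ≠ 0 := (poch_pos hc n).ne'
    have h3 : ((n.factorial : ℝ)) ≠ 0 := by positivity
    field_simp
  have hGnorm : ∀ n : ℕ, ∫ s in Ioo (0:ℝ) 1, ‖G n s‖ = ∫ s in Ioo (0:ℝ) 1, G n s := by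
    intro n
    apply setIntegral_congr_fun measurableSet_Ioo
    intro s hs
    show ‖G n s‖ = G n s
    rw [Real.norm_eq_abs, abs_of_nonneg]
    rw [hG]
    have h1 : (0:ℝ) ≤ s := hs.1.le
    have h2 : (0:ℝ) ≤ 1 - s := by linarith [hs.2]
    have := poch_pos ha n
    positivity
  have hsum : Summable (fun n : ℕ => ∫ s in Ioo (0:ℝ) 1, ‖G n s‖) := by
    simp_rw [hGnorm, hGval]
    exact (summable_poch ha hb hc hz0.le hz1).mul_left _
  have hswap := MeasureTheory.integral_tsum_of_summable_integral_norm
    (μ := volume.restrict (Ioo (0:ℝ) 1)) hGint hsum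
  have hpt : ∀ s ∈ Ioo (0:ℝ) 1, ∑' n : ℕ, G n s
      = s ^ (b-1) * (1-s) ^ (-(1/2 : ℝ)) * (1 - z*s) ^ (-a) := by
    intro s hs
    have hs0 : (0:ℝ) < s := hs.1
    have hs1 : s < 1 := hs.2
    have h1 : ∀ n : ℕ, G n s
        = (s ^ (b-1) * (1-s) ^ (-(1/2 : ℝ))) * (poch a n / (n.factorial : ℝ) * (z*s)^n) := by
      intro n
      rw [hG]
      simp only
      rw [show (b + (n:ℝ)) - 1 = (b-1) + n by ring, Real.rpow_add hs0, Real.rpow_natCast,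
        mul_pow, show (1/2 : ℝ) - 1 = -(1/2 : ℝ) by norm_num]
      ring
    rw [tsum_congr h1, tsum_mul_left, binom_series ha (by positivity)
      (by nlinarith : z * s < 1)]
  rw [← setIntegral_congr_fun measurableSet_Ioo hpt, ← hswap]
  rw [tsum_congr hGval, tsum_mul_left]
  rfl

/-- For an integer `d ≥ 3` and `ζ ∈ (0, π)`,
`∫_ζ^π (1−cos θ)^{−(d−2)/2} (1+cos θ)^{(d−3)/2} sin θ / √(cos ζ − cos θ) dθ
  = (√π Γ((d−1)/2)/Γ(d/2)) cos^{d−2}(ζ/2) ₂F₁((d−2)/2,(d−1)/2;d/2;cos²(ζ/2))`. -/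
theorem abel_integral_south (d : ℕ) (hd : 3 ≤ d) (ζ : ℝ) (h0 : 0 < ζ) (h1 : ζ < π) :
    (∫ θ in ζ..π,
        (1 - Real.cos θ) ^ (-(((d:ℝ) - 2)/2)) * (1 + Real.cos θ) ^ (((d:ℝ) - 3)/2)
        * Real.sin θ / Real.sqrt (Real.cos ζ - Real.cos θ))
      = Real.sqrt π * Real.Gamma (((d:ℝ) - 1)/2) / Real.Gamma ((d:ℝ)/2)
        * Real.cos (ζ/2) ^ ((d:ℝ) - 2)
        * hyp2F1 (((d:ℝ) - 2)/2) (((d:ℝ) - 1)/2) ((d:ℝ)/2) (Real.cos (ζ/2) ^ 2) := by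
  have hd3 : (3:ℝ) ≤ (d:ℝ) := by exact_mod_cast hd
  set a : ℝ := ((d:ℝ) - 2)/2 with ha_def
  set b : ℝ := ((d:ℝ) - 1)/2 with hb_def
  have ha : 0 < a := by rw [ha_def]; linarith
  have hb : 0 < b := by rw [hb_def]; linarith
  have hcos : 0 < Real.cos (ζ/2) := Real.cos_pos_of_mem_Ioo
    ⟨by linarith [Real.pi_pos], by linarith⟩
  set z : ℝ := Real.cos (ζ/2) ^ 2 with hz_def
  have hz0 : 0 < z := by positivity
  have hcos1 : Real.cos (ζ/2) < 1 := by
    have := Real.cos_lt_cos_of_nonneg_of_le_pi (le_refl 0) (by linarith) (by linarith : (0:ℝ) < ζ/2)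
    simpa using this
  have hz1 : z < 1 := by rw [hz_def]; nlinarith
  have h2z : (0:ℝ) < 2*z := by linarith
  have hcz : Real.cos ζ = 2*z - 1 := by
    have := Real.cos_sq (ζ/2)
    rw [hz_def]
    rw [show 2*(ζ/2) = ζ by ring] at this
    linarith
  have hcosζ1 : Real.cos ζ < 1 := by
    have := Real.cos_lt_cos_of_nonneg_of_le_pi (le_refl 0) h1.le h0
    simpa using this
  set φ : ℝ → ℝ := fun θ => (1 + Real.cos θ)/(2*z) with hφ
  set Gf : ℝ → ℝ := fun s => s ^ (b-1) * (1-s) ^ (-(1/2 : ℝ)) * (1 - z*s) ^ (-a) with hGf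
  -- derivative
  have hderiv : ∀ θ ∈ Ioo ζ π, HasDerivWithinAt φ (-Real.sin θ/(2*z)) (Ioo ζ π) θ := by
    intro θ _
    exact (((Real.hasDerivAt_cos θ).const_add 1).div_const (2*z)).hasDerivWithinAt
  -- injectivity
  have hinj : InjOn φ (Ioo ζ π) := by
    intro x hx y hy h
    have hx' : x ∈ Icc 0 π := ⟨by linarith [hx.1], hx.2.le⟩
    have hy' : y ∈ Icc 0 π := ⟨by linarith [hy.1], hy.2.le⟩
    apply Real.injOn_cos hx' hy'
    have := h
    rw [hφ] at this
    simp only at this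
    field_simp at this
    linarith
  -- image
  have himg : φ '' (Ioo ζ π) = Ioo (0:ℝ) 1 := by
    ext s
    constructor
    · rintro ⟨θ, hθ, rfl⟩
      have h1u : -1 < Real.cos θ := by
        have := Real.cos_lt_cos_of_nonneg_of_le_pi (by linarith [hθ.1] : (0:ℝ) ≤ θ)
          (le_refl π) hθ.2
        simpa using this
      have h2u : Real.cos θ < Real.cos ζ :=
        Real.cos_lt_cos_of_nonneg_of_le_pi h0.le hθ.2.le hθ.1
      constructor
      · show 0 < (1 + Real.cos θ)/(2*z)
        apply div_pos (by linarith) h2z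
      · show (1 + Real.cos θ)/(2*z) < 1
        rw [div_lt_one h2z]
        linarith [hcz]
    · intro hs
      set u₀ : ℝ := 2*z*s - 1 with hu₀
      have hsm : -1 < u₀ := by have := mul_pos h2z hs.1; rw [hu₀]; linarith
      have hsc : u₀ < Real.cos ζ := by
        rw [hcz, hu₀]
        nlinarith [hs.2, h2z]
      have hu₀le : u₀ ≤ 1 := by linarith [Real.cos_le_one ζ]
      refine ⟨Real.arccos u₀, ⟨?_, ?_⟩, ?_⟩
      · -- ζ < arccos u₀
        have h := Real.strictAntiOn_arccos ⟨hsm.le, hu₀le⟩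
          ⟨Real.neg_one_le_cos ζ, Real.cos_le_one ζ⟩ hsc
        rwa [Real.arccos_cos h0.le h1.le] at h
      · -- arccos u₀ < π
        have h := Real.strictAntiOn_arccos (⟨le_refl (-1), by norm_num⟩ : (-1:ℝ) ∈ Icc (-1) 1)
          ⟨hsm.le, hu₀le⟩ hsm
        rwa [Real.arccos_neg_one] at h
      · show (1 + Real.cos (Real.arccos u₀))/(2*z) = s
        rw [Real.cos_arccos hsm.le hu₀le, hu₀]
        field_simp
        ring
  -- change of variables
  have hchange := integral_image_eq_integral_abs_deriv_smul measurableSet_Ioo hderiv hinj Gf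
  rw [himg] at hchange
  -- prefactor identity
  have hpre : (2*z) * (2*z)^(b-1) * (2*z)^(-(1/2):ℝ) * (2:ℝ)^(-a) = z^a := by
    have e1 : (2*z) * (2*z)^(b-1) * (2*z)^(-(1/2):ℝ) = (2*z)^a := by
      rw [show (2*z) * (2*z)^(b-1) * (2*z)^(-(1/2):ℝ)
          = (2*z)^(1:ℝ) * ((2*z)^(b-1) * (2*z)^(-(1/2):ℝ)) by rw [Real.rpow_one]; ring,
        ← Real.rpow_add h2z, ← Real.rpow_add h2z]
      congr 1
      rw [ha_def, hb_def]; ring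
    rw [e1, Real.mul_rpow (by norm_num) hz0.le]
    have e2 : (2:ℝ)^a * (2:ℝ)^(-a) = 1 := by
      rw [← Real.rpow_add (by norm_num : (0:ℝ) < 2)]; simp
    calc (2:ℝ)^a * z^a * (2:ℝ)^(-a) = z^a * ((2:ℝ)^a * (2:ℝ)^(-a)) := by ring
      _ = z^a := by rw [e2, mul_one]
  -- pointwise identity
  have hpt : ∀ θ ∈ Ioo ζ π,
      (1 - Real.cos θ) ^ (-a) * (1 + Real.cos θ) ^ (b-1)
        * Real.sin θ / Real.sqrt (Real.cos ζ - Real.cos θ)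
      = z^a * (|(-Real.sin θ/(2*z))| • Gf (φ θ)) := by
    intro θ hθ
    have hsin : 0 < Real.sin θ :=
      Real.sin_pos_of_pos_of_lt_pi (by linarith [hθ.1]) hθ.2
    have h1u : -1 < Real.cos θ := by
      have := Real.cos_lt_cos_of_nonneg_of_le_pi (by linarith [hθ.1] : (0:ℝ) ≤ θ)
        (le_refl π) hθ.2
      simpa using this
    have h2u : Real.cos θ < Real.cos ζ :=
      Real.cos_lt_cos_of_nonneg_of_le_pi h0.le hθ.2.le hθ.1
    have hP1 : (0:ℝ) < 1 - Real.cos θ := by linarith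
    have hP2 : (0:ℝ) < 1 + Real.cos θ := by linarith
    have hP3 : (0:ℝ) < Real.cos ζ - Real.cos θ := by linarith
    -- compute Gf (φ θ)
    have e2 : 1 - φ θ = (Real.cos ζ - Real.cos θ)/(2*z) := by
      rw [hφ]; simp only; rw [hcz]; field_simp; ring
    have e3 : 1 - z * φ θ = (1 - Real.cos θ)/2 := by
      rw [hφ]; simp only; field_simp; ring
    have habs : |(-Real.sin θ/(2*z))| = Real.sin θ/(2*z) := by
      rw [abs_div, abs_neg, abs_of_pos hsin, abs_of_pos h2z]
    rw [habs, smul_eq_mul, hGf]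
    simp only
    rw [e2, e3, hφ]
    simp only
    have hsq : (Real.sqrt (Real.cos ζ - Real.cos θ))⁻¹
        = (Real.cos ζ - Real.cos θ) ^ (-(1/2):ℝ) := by
      rw [Real.sqrt_eq_rpow, ← Real.rpow_neg hP3.le]
    rw [Real.div_rpow hP2.le h2z.le, Real.div_rpow hP3.le h2z.le,
      Real.div_rpow hP1.le (by norm_num : (0:ℝ) ≤ 2),
      div_eq_mul_inv _ (Real.sqrt _), hsq]
    have hza' : (0:ℝ) < z ^ a := Real.rpow_pos_of_pos hz0 _
    set A1 : ℝ := (1 - Real.cos θ)^(-a) with hA1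
    set A2 : ℝ := (1 + Real.cos θ)^(b-1) with hA2
    set A3 : ℝ := (Real.cos ζ - Real.cos θ)^(-(1/2):ℝ) with hA3
    set B1 : ℝ := (2*z)^(b-1) with hB1
    set B2 : ℝ := (2*z)^(-(1/2):ℝ) with hB2
    set B3 : ℝ := ((2:ℝ))^(-a) with hB3
    set ZA : ℝ := z ^ a with hZA
    have hne1 : B1 ≠ 0 := (Real.rpow_pos_of_pos h2z _).ne'
    have hne2 : B2 ≠ 0 := (Real.rpow_pos_of_pos h2z _).ne'
    have hne3 : B3 ≠ 0 := (Real.rpow_pos_of_pos (by norm_num) _).ne'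
    clear_value A1 A2 A3 B1 B2 B3 ZA
    field_simp
    linear_combination A1 * A2 * A3 * hpre - A1 * A2 * A3 * 2 * B1 * B2 * B3 * hz_def
  -- assemble
  have hmain : (∫ θ in ζ..π,
      (1 - Real.cos θ) ^ (-a) * (1 + Real.cos θ) ^ (b-1)
        * Real.sin θ / Real.sqrt (Real.cos ζ - Real.cos θ))
      = z^a * ((Real.Gamma b * Real.Gamma (1/2) / Real.Gamma (b + 1/2))
        * hyp2F1 a b (b + 1/2) z) := by
    rw [intervalIntegral.integral_of_le h1.le, MeasureTheory.integral_Ioc_eq_integral_Ioo,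
      setIntegral_congr_fun measurableSet_Ioo hpt, MeasureTheory.integral_const_mul,
      ← hchange, euler_integral ha hb hz0 hz1]
  have hbd : b + 1/2 = (d:ℝ)/2 := by rw [hb_def]; ring
  have hza : z^a = Real.cos (ζ/2) ^ ((d:ℝ)-2) := by
    rw [hz_def, ← Real.rpow_natCast (Real.cos (ζ/2)) 2, ← Real.rpow_mul hcos.le]
    congr 1
    push_cast
    rw [ha_def]; ring
  simp only [show ((d:ℝ)-3)/2 = b - 1 by rw [hb_def]; ring]
  rw [hmain, hbd, hza, Real.Gamma_one_half_eq]
  ring
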